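/- Let m be an odd prime and let τ be a non-real complex number satisfying τ² - t·τ + n = 0 for integers t and n. Then there exists a complex number σ such that the subring ℤ[σ] of ℂ generated by σ equals ℤ[τ], and such that the square of the absolute value of σ (i.e. σ·conj(σ)) is an integer not divisible by m. (In fact σ can be taken of the form τ + k for some integer k, in which case σ·conj(σ) = n + k·t + k².) -/

import Mathlib

lemma adjoin_add_int (τ : ℂ) (k : ℤ) :
    Algebra.adjoin ℤ {τ + (k : ℂ)} = Algebra.adjoin ℤ {τ} := by
  apply le_antisymm
  · apply Algebra.adjoin_le
    intro x hx
    simp only [Set.mem_singleton_iff] at hx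
    subst hx
    exact Subalgebra.add_mem _ (Algebra.self_mem_adjoin_singleton ℤ τ)
      (Subalgebra.intCast_mem _ k)
  · apply Algebra.adjoin_le
    intro x hx
    simp only [Set.mem_singleton_iff] at hx
    have : x = (τ + (k : ℂ)) + ((-k : ℤ) : ℂ) := by rw [hx]; push_cast; ring
    rw [this]
    exact Subalgebra.add_mem _ (Algebra.self_mem_adjoin_singleton ℤ _)
      (Subalgebra.intCast_mem _ _)

/-- Lemma 3.1: an imaginary quadratic order `ℤ[τ]` admits a generator whose
norm (= `σ * conj σ`) is an integer not divisible by the odd prime `m`. -/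
theorem exists_generator_norm_coprime
    (m : ℕ) (hm : m.Prime) (hmodd : Odd m)
    (t n : ℤ) (τ : ℂ) (hτ : τ.im ≠ 0)
    (hquad : τ ^ 2 - (t : ℂ) * τ + (n : ℂ) = 0) :
    ∃ σ : ℂ, Algebra.adjoin ℤ {σ} = Algebra.adjoin ℤ {τ} ∧
      ∃ N : ℤ, σ * (starRingEnd ℂ) σ = (N : ℂ) ∧ ¬ ((m : ℤ) ∣ N) := by
  -- extract real and imaginary parts of the quadratic relation
  have hre := congrArg Complex.re hquad
  have him := congrArg Complex.im hquad
  simp only [pow_two, Complex.add_re, Complex.sub_re, Complex.mul_re, Complex.mul_im,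
    Complex.add_im, Complex.sub_im, Complex.intCast_re, Complex.intCast_im,
    Complex.zero_re, Complex.zero_im] at hre him
  have ht : (t : ℝ) = 2 * τ.re := by
    have h : τ.im * (τ.re + τ.re - t) = 0 := by linear_combination him
    rcases mul_eq_zero.1 h with h | h
    · exact absurd h hτ
    · linarith
  have hn : (n : ℝ) = τ.re ^ 2 + τ.im ^ 2 := by
    rw [ht] at hre
    linear_combination hre
  -- find k ∈ ℤ with m ∤ n + k t + k²
  have hexists : ∃ k : ℤ, ¬ ((m : ℤ) ∣ (n + k * t + k ^ 2)) := by
    by_contra h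
    push_neg at h
    have h0 := h 0
    have h1 := h 1
    have h2 := h 2
    have hd : (m : ℤ) ∣ 2 := by
      have := dvd_sub (dvd_sub h2 h1) (dvd_sub h1 h0)
      convert this using 1
      · rfl
      ring
    have hd' : m ∣ 2 := Int.ofNat_dvd.mp (by exact_mod_cast hd)
    have := Nat.le_of_dvd (by norm_num) hd'
    have h2le := hm.two_le
    rw [Nat.odd_iff] at hmodd
    omega
  obtain ⟨k, hk⟩ := hexists
  refine ⟨τ + (k : ℂ), adjoin_add_int τ k, n + k * t + k ^ 2, ?_, hk⟩
  rw [Complex.mul_conj]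
  have : Complex.normSq (τ + (k : ℂ)) = ((n + k * t + k ^ 2 : ℤ) : ℝ) := by
    simp only [Complex.normSq_apply, Complex.add_re, Complex.add_im, Complex.intCast_re,
      Complex.intCast_im, add_zero]
    push_cast
    linear_combination -hn - (k : ℝ) * ht
  rw [this]
  norm_cast
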